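/- Let (𝒳, ρ) be a metric space, U ⊆ 𝒳 a subset, and r > 0. For any sequence (X_n)_{n≥1} in 𝒳 and any nearest neighbor process (X̃_n), the number of indices n ≥ 2 such that X_n ∈ U and ρ(X_n, X̃_n) ≥ r is at most the r-packing number 𝒫_r(U). -/
import Mathlib


open MeasureTheory Filter Set Metric
open scoped ENNReal NNReal

noncomputable section

/-- The margin of a point: distance to the nearest differently-labeled point (`⊤` if none). -/
def margin {α 𝒴 : Type*} [PseudoMetricSpace α] (η : α → 𝒴) (x : α) : ℝ≥0∞ :=
  ⨅ (x' : α) (_ : η x' ≠ η x), edist x x'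

/-- The boundary of a labeling function: the set of points with zero margin. -/
def labelBoundary {α 𝒴 : Type*} [PseudoMetricSpace α] (η : α → 𝒴) : Set α :=
  {x | margin η x = 0}

/-- A set is mutually-labeling for `η` if its diameter is smaller than the margin of
each of its points. -/
def MutuallyLabeling {α 𝒴 : Type*} [PseudoMetricSpace α] (η : α → 𝒴) (U : Set α) : Prop :=
  ∀ x ∈ U, EMetric.diam U < margin η x

/-- `Xt` is a nearest-neighbor process for the sequence `X` (indices start at 1):
for every `n ≥ 2`, `Xt n` is one of `X 1, …, X (n-1)` realizing the minimal distance
to `X n`. -/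
def IsNNProcess {α : Type*} [PseudoMetricSpace α] (X Xt : ℕ → α) : Prop :=
  ∀ n, 2 ≤ n → (∃ m, 1 ≤ m ∧ m < n ∧ Xt n = X m) ∧
    ∀ m, 1 ≤ m → m < n → dist (X n) (Xt n) ≤ dist (X n) (X m)

/-- The natural filtration of the process `X`: at time `n` it is `σ(X 1, …, X n)`. -/
def natFilt {Ω α : Type*} [MeasurableSpace α] (X : ℕ → Ω → α) (n : ℕ) : MeasurableSpace Ω :=
  ⨆ m ∈ Set.Icc 1 n, MeasurableSpace.comap (X m) inferInstance

/-- `X` is uniformly dominated by `ν` at rate `ε` (uniform absolute continuity):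
for every `δ > 0` and every measurable `A` with `ν A < δ`, almost surely
`P(X n ∈ A | 𝓕 (n-1)) < ε δ` for every `n ≥ 1`. -/
def UniformlyDominatedAtRate {Ω α : Type*} [MeasurableSpace Ω] [MeasurableSpace α]
    (P : Measure Ω) (X : ℕ → Ω → α) (ν : Measure α) (ε : ℝ → ℝ) : Prop :=
  ∀ δ : ℝ, 0 < δ → ∀ A : Set α, MeasurableSet A → ν A < ENNReal.ofReal δ →
    ∀ᵐ ω ∂P, ∀ n, 1 ≤ n →
      (P[fun ω' => A.indicator (fun _ => (1 : ℝ)) (X n ω') | natFilt X (n - 1)]) ω < ε δ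

/-- `X` is uniformly dominated by `ν`. -/
def UniformlyDominated {Ω α : Type*} [MeasurableSpace Ω] [MeasurableSpace α]
    (P : Measure Ω) (X : ℕ → Ω → α) (ν : Measure α) : Prop :=
  ∀ ε : ℝ, 0 < ε → ∃ δ : ℝ, 0 < δ ∧ ∀ A : Set α, MeasurableSet A → ν A < ENNReal.ofReal δ →
    ∀ᵐ ω ∂P, ∀ n, 1 ≤ n →
      (P[fun ω' => A.indicator (fun _ => (1 : ℝ)) (X n ω') | natFilt X (n - 1)]) ω < ε

/-- `X` is ergodically dominated by `ν` (ergodic continuity). -/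
def ErgodicallyDominated {Ω α : Type*} [MeasurableSpace Ω] [MeasurableSpace α]
    (P : Measure Ω) (X : ℕ → Ω → α) (ν : Measure α) : Prop :=
  ∀ ε : ℝ, 0 < ε → ∃ δ : ℝ, 0 < δ ∧ ∀ A : Set α, MeasurableSet A → ν A < ENNReal.ofReal δ →
    ∀ᵐ ω ∂P, Filter.limsup (fun N : ℕ =>
      (∑ n ∈ Finset.Icc 1 N, A.indicator (fun _ => (1 : ℝ)) (X n ω)) / N) atTop < ε

/-- `X` is a `σ`-smoothed process with respect to `ν`. -/
def Smoothed {Ω α : Type*} [MeasurableSpace Ω] [MeasurableSpace α]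
    (P : Measure Ω) (X : ℕ → Ω → α) (ν : Measure α) (σ : ℝ) : Prop :=
  ∀ A : Set α, MeasurableSet A →
    ∀ᵐ ω ∂P, ∀ n, 1 ≤ n →
      (P[fun ω' => A.indicator (fun _ => (1 : ℝ)) (X n ω') | natFilt X (n - 1)]) ω ≤
        σ⁻¹ * (ν A).toReal

/-- `α` is a `d`-doubling metric space: every ball can be covered by `2 ^ d` balls of
half the radius. -/
def DoublingWith (α : Type*) [PseudoMetricSpace α] (d : ℕ) : Prop :=
  ∀ (x : α) (r : ℝ), ∃ t : Finset α, t.card ≤ 2 ^ d ∧ ball x r ⊆ ⋃ y ∈ t, ball y (r / 2)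

/-- `(α, ν)` is upper doubling with parameters `(c, d)`. -/
def UpperDoubling (α : Type*) [PseudoMetricSpace α] [MeasurableSpace α]
    (ν : Measure α) (c : ℝ) (d : ℕ) : Prop :=
  DoublingWith α d ∧ ∀ (x : α) (r : ℝ), 0 < r → ν (ball x r) ≤ ENNReal.ofReal (c * r ^ d)

/-- The `r`-packing number of a set `U`. -/
def packingNumber {α : Type*} [PseudoMetricSpace α] (r : ℝ) (U : Set α) : ℕ∞ :=
  ⨆ (Z : Finset α) (_ : ↑Z ⊆ U ∧ ∀ z ∈ Z, ∀ z' ∈ Z, z ≠ z' → r ≤ dist z z'), (Z.card : ℕ∞)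

/-- The `r`-covering number of a set `A`. -/
def coveringNumber {α : Type*} [PseudoMetricSpace α] (r : ℝ) (A : Set α) : ℕ∞ :=
  ⨅ (t : Finset α) (_ : A ⊆ ⋃ y ∈ t, ball y r), (t.card : ℕ∞)

/-- The upper box-counting dimension of a set. -/
def boxDim {α : Type*} [PseudoMetricSpace α] (A : Set α) : ℝ :=
  Filter.limsup (fun r : ℝ => Real.log ((coveringNumber r A).toNat : ℝ) / Real.log (1 / r))
    (nhdsWithin 0 (Set.Ioi 0))

/-- The mutually-labeling covering number of `V` for `η`. -/
def mlCoveringNumber {α 𝒴 : Type*} [PseudoMetricSpace α] (η : α → 𝒴) (V : Set α) : ℕ∞ :=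
  ⨅ (𝒰 : Finset (Set α)) (_ : (∀ U ∈ 𝒰, MutuallyLabeling η U) ∧ V ⊆ ⋃ U ∈ 𝒰, U),
    (𝒰.card : ℕ∞)

/-- The `r`-expansion of a set. -/
def expansion {α : Type*} [PseudoMetricSpace α] (A : Set α) (r : ℝ) : Set α :=
  ⋃ x ∈ A, ball x r

/-- The upper Minkowski content of `A` with respect to `ν`. -/
def minkowskiContent {α : Type*} [PseudoMetricSpace α] [MeasurableSpace α]
    (ν : Measure α) (A : Set α) : ℝ≥0∞ :=
  Filter.limsup (fun r : ℝ => (ν (expansion A r) - ν A) / ENNReal.ofReal r)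
    (nhdsWithin 0 (Set.Ioi 0))

/-- A length space: the distance between two points is the infimum of lengths of
continuous paths joining them. -/
def IsLengthSpace (α : Type*) [PseudoMetricSpace α] : Prop :=
  ∀ x y : α, edist x y =
    ⨅ (γ : ℝ → α) (_ : ContinuousOn γ (Set.Icc 0 1)) (_ : γ 0 = x) (_ : γ 1 = y),
      eVariationOn γ (Set.Icc 0 1)

/-- The ball associated to a (center, dyadic level) pair: radius `2 ^ (-level)`. -/
def ballOf {α : Type*} [PseudoMetricSpace α] (p : α × ℕ) : Set α :=
  ball p.1 ((2 : ℝ) ^ (-(p.2 : ℤ)))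

/-- The insertion rank of a new point `x` relative to an existing cover tree `C`:
the least `ℓ ≥ 1` such that no ball of radius `2 ^ (-ℓ)` in `C` contains `x`. -/
def nextRank {α : Type*} [PseudoMetricSpace α] (C : Set (α × ℕ)) (x : α) : ℕ :=
  sInf {ℓ : ℕ | 1 ≤ ℓ ∧ ∀ q ∈ C, q.2 = ℓ → x ∉ ballOf q}

/-- Sequentially constructed cover trees for the points `a 1, a 2, …`; a cover tree is
recorded as the set of its (center, dyadic level) pairs. -/
def coverTree {α : Type*} [PseudoMetricSpace α] (a : ℕ → α) : ℕ → Set (α × ℕ)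
  | 0 => ∅
  | 1 => {p | p.1 = a 1}
  | (k + 2) => coverTree a (k + 1) ∪
      {p | p.1 = a (k + 2) ∧ nextRank (coverTree a (k + 1)) (a (k + 2)) ≤ p.2}

/-- The insertion ranks of the sequentially constructed cover trees. -/
def insertionRank {α : Type*} [PseudoMetricSpace α] (a : ℕ → α) : ℕ → ℕ
  | 0 => 0
  | 1 => 0
  | (k + 2) => nextRank (coverTree a (k + 1)) (a (k + 2))

/-- Packing bound: for any sequence and nearest neighbor process, the
number of times `n ≥ 2` at which `X n ∈ U` and the nearest neighbor distance is at least
`r` is bounded by the `r`-packing number of `U`. -/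
theorem separated_events_le_packingNumber
    {α : Type*} [MetricSpace α] (U : Set α) (r : ℝ) (hr : 0 < r)
    (X Xt : ℕ → α) (hnn : IsNNProcess X Xt) :
    Set.encard {n : ℕ | 2 ≤ n ∧ X n ∈ U ∧ r ≤ dist (X n) (Xt n)} ≤ packingNumber r U := by
  classical
  set S := {n : ℕ | 2 ≤ n ∧ X n ∈ U ∧ r ≤ dist (X n) (Xt n)} with hSdef
  have hsep : ∀ n ∈ S, ∀ m ∈ S, n ≠ m → r ≤ dist (X n) (X m) := by
    have key : ∀ n ∈ S, ∀ m ∈ S, m < n → r ≤ dist (X n) (X m) := by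
      intro n hn m hm hlt
      obtain ⟨hn2, _, hnd⟩ := hn
      obtain ⟨hm2, _, _⟩ := hm
      exact hnd.trans ((hnn n hn2).2 m (le_trans one_le_two hm2) hlt)
    intro n hn m hm hne
    rcases hne.lt_or_gt with h | h
    · rw [dist_comm]; exact key m hm n hn h
    · exact key n hn m hm h
  have hinj : Set.InjOn X S := by
    intro n hn m hm h
    by_contra hne
    have := hsep n hn m hm hne
    rw [h, dist_self] at this
    linarith
  have hbound : ∀ T : Finset ℕ, ↑T ⊆ S → (T.card : ℕ∞) ≤ packingNumber r U := by
    intro T hT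
    have hZ : ((T.image X : Finset α) : Set α) ⊆ U ∧
        ∀ z ∈ T.image X, ∀ z' ∈ T.image X, z ≠ z' → r ≤ dist z z' := by
      constructor
      · intro z hz
        simp only [Finset.coe_image, Set.mem_image, Finset.mem_coe] at hz
        obtain ⟨n, hn, rfl⟩ := hz
        exact (hT hn).2.1
      · intro z hz z' hz' hne
        simp only [Finset.mem_image] at hz hz'
        obtain ⟨n, hn, rfl⟩ := hz
        obtain ⟨m, hm, rfl⟩ := hz'
        exact hsep n (hT hn) m (hT hm) (fun h => hne (by rw [h]))
    have hcard : (T.image X).card = T.card :=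
      Finset.card_image_of_injOn (fun a ha b hb => hinj (hT ha) (hT hb))
    calc (T.card : ℕ∞) = ((T.image X).card : ℕ∞) := by rw [hcard]
      _ ≤ packingNumber r U :=
        le_iSup₂ (f := fun (Z : Finset α) (_ : (↑Z : Set α) ⊆ U ∧
          ∀ z ∈ Z, ∀ z' ∈ Z, z ≠ z' → r ≤ dist z z') => (Z.card : ℕ∞)) (T.image X) hZ
  by_cases hfin : S.Finite
  · rw [hfin.encard_eq_coe_toFinset_card]
    exact hbound hfin.toFinset hfin.coe_toFinset.subset
  · rw [Set.Infinite.encard_eq hfin]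
    by_contra h
    have hlt : packingNumber r U < ⊤ := lt_of_not_ge h
    obtain ⟨T, hTsub, hTcard⟩ :=
      Set.Infinite.exists_subset_card_eq hfin ((packingNumber r U).toNat + 1)
    have := hbound T hTsub
    rw [hTcard] at this
    have h2 : ((packingNumber r U).toNat : ℕ∞) = packingNumber r U :=
      ENat.coe_toNat hlt.ne
    have h3 : packingNumber r U + 1 ≤ packingNumber r U := by
      conv_lhs => rw [← h2]
      exact_mod_cast this
    exact absurd ((ENat.add_one_le_iff hlt.ne).mp h3) (lt_irrefl _)
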